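/- Let H and D be complex Hilbert spaces, U a unitary operator on H, B : D → H a linear isometry, Γ a contraction on D, and T := U + B(Γ − I)B*U. For z in the open unit disc 𝔻 define F₁(z) := zB*(I − zU*)⁻¹U*B. Then for every z ∈ 𝔻 the operators I_H − zT* and I_D − (Γ* − I)F₁(z) are invertible, and (I − zT*)⁻¹ = (I − zU*)⁻¹ + z(I − zU*)⁻¹U*B[I_D − (Γ* − I)F₁(z)]⁻¹(Γ* − I)B*(I − zU*)⁻¹. -/

import Mathlib

set_option synthInstance.maxHeartbeats 1000000
set_option maxHeartbeats 1000000

open ContinuousLinearMap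
open scoped InnerProductSpace

/-- Woodbury-type identity: if `1 - A C` is invertible then so is `1 - C A`, with
`(1 - C A)⁻¹ = 1 + C (1 - A C)⁻¹ A`. -/
private lemma woodbury {H D : Type*} [NormedAddCommGroup H] [NormedSpace ℂ H]
    [NormedAddCommGroup D] [NormedSpace ℂ D]
    (A : D →L[ℂ] H) (C : H →L[ℂ] D) (h : IsUnit ((1 : H →L[ℂ] H) - A ∘L C)) :
    IsUnit ((1 : D →L[ℂ] D) - C ∘L A) ∧
      Ring.inverse ((1 : D →L[ℂ] D) - C ∘L A)
        = 1 + C ∘L Ring.inverse ((1 : H →L[ℂ] H) - A ∘L C) ∘L A := by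
  set V : H →L[ℂ] H := Ring.inverse ((1 : H →L[ℂ] H) - A ∘L C) with hV
  have h1 : ((1 : H →L[ℂ] H) - A ∘L C) * V = 1 := Ring.mul_inverse_cancel _ h
  have h2 : V * ((1 : H →L[ℂ] H) - A ∘L C) = 1 := Ring.inverse_mul_cancel _ h
  rw [mul_def] at h1 h2
  have key1 : ∀ y : H, A (C (V y)) = V y - y := by
    intro y
    have hy := DFunLike.congr_fun h1 y
    simp only [comp_apply, sub_apply, one_apply_eq_self] at hy
    rw [sub_eq_iff_eq_add] at hy
    conv_rhs => rw [hy]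
    abel
  have key2 : ∀ y : H, V (A (C y)) = V y - y := by
    intro y
    have hy := DFunLike.congr_fun h2 y
    simp only [comp_apply, sub_apply, one_apply_eq_self, map_sub] at hy
    rw [sub_eq_iff_eq_add] at hy
    conv_rhs => rw [hy]
    abel
  have m1 : ((1 : D →L[ℂ] D) - C ∘L A) * (1 + C ∘L V ∘L A) = 1 := by
    rw [mul_def]; ext x
    simp only [comp_apply, add_apply, sub_apply, one_apply_eq_self, map_add, map_sub, key1]
    abel
  have m2 : ((1 : D →L[ℂ] D) + C ∘L V ∘L A) * (1 - C ∘L A) = 1 := by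
    rw [mul_def]; ext x
    simp only [comp_apply, add_apply, sub_apply, one_apply_eq_self, map_add, map_sub, key2]
    abel
  have hu : IsUnit ((1 : D →L[ℂ] D) - C ∘L A) :=
    ⟨⟨(1 : D →L[ℂ] D) - C ∘L A, 1 + C ∘L V ∘L A, m1, m2⟩, rfl⟩
  exact ⟨hu, by
    simpa using Ring.inverse_unit
      (⟨(1 : D →L[ℂ] D) - C ∘L A, 1 + C ∘L V ∘L A, m1, m2⟩ : (D →L[ℂ] D)ˣ)⟩

theorem resolvent_formula
    {H D : Type*} [NormedAddCommGroup H] [InnerProductSpace ℂ H] [CompleteSpace H]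
    [NormedAddCommGroup D] [InnerProductSpace ℂ D] [CompleteSpace D]
    (U : H →L[ℂ] H) (hU : U ∈ unitary (H →L[ℂ] H))
    (B : D →L[ℂ] H) (hB : ∀ x : D, ‖B x‖ = ‖x‖)
    (Γ : D →L[ℂ] D) (hΓ : ‖Γ‖ ≤ 1)
    (T : H →L[ℂ] H) (hT : T = U + B ∘L (Γ - 1) ∘L adjoint B ∘L U)
    (z : ℂ) (hz : ‖z‖ < 1)
    (F₁ : D →L[ℂ] D)
    (hF₁ : F₁ = z • (adjoint B ∘L Ring.inverse (1 - z • adjoint U) ∘L adjoint U ∘L B)) :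
    IsUnit (1 - z • adjoint T) ∧
    IsUnit ((1 : D →L[ℂ] D) - (adjoint Γ - 1) ∘L F₁) ∧
    Ring.inverse (1 - z • adjoint T) =
      Ring.inverse (1 - z • adjoint U) +
        z • (Ring.inverse (1 - z • adjoint U) ∘L adjoint U ∘L B ∘L
          Ring.inverse ((1 : D →L[ℂ] D) - (adjoint Γ - 1) ∘L F₁) ∘L (adjoint Γ - 1) ∘L
            adjoint B ∘L Ring.inverse (1 - z • adjoint U)) := by
  -- B is an isometry: inner products are preserved and `B* B = 1`
  have hBi : ∀ x y : D, ⟪B x, B y⟫_ℂ = ⟪x, y⟫_ℂ := fun x y =>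
    (LinearIsometry.inner_map_map ⟨B.toLinearMap, hB⟩ x y)
  have hB1 : adjoint B ∘L B = 1 := by
    ext x
    refine ext_inner_right ℂ fun y => ?_
    simp only [comp_apply, one_apply_eq_self, adjoint_inner_left, hBi]
  have hB1' : ∀ x : D, adjoint B (B x) = x := fun x => by
    have := DFunLike.congr_fun hB1 x
    simpa using this
  -- unitarity facts
  have hU1 : adjoint U ∘L U = 1 := by
    rw [← star_eq_adjoint, ← mul_def]; exact hU.1
  have hU2 : U ∘L adjoint U = 1 := by
    rw [← star_eq_adjoint, ← mul_def]; exact hU.2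
  have hUn : ∀ x : H, ‖U x‖ = ‖x‖ := by
    intro x
    have h1 : ⟪U x, U x⟫_ℂ = ⟪x, x⟫_ℂ := by
      rw [← adjoint_inner_left]
      rw [show adjoint U (U x) = x by simpa using DFunLike.congr_fun hU1 x]
    have h2 : ‖U x‖ ^ 2 = ‖x‖ ^ 2 := by
      rw [← inner_self_eq_norm_sq (𝕜 := ℂ), ← inner_self_eq_norm_sq (𝕜 := ℂ), h1]
    calc ‖U x‖ = Real.sqrt (‖U x‖ ^ 2) := (Real.sqrt_sq (norm_nonneg _)).symm
      _ = Real.sqrt (‖x‖ ^ 2) := by rw [h2]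
      _ = ‖x‖ := Real.sqrt_sq (norm_nonneg _)
  have hUsn : ∀ x : H, ‖adjoint U x‖ = ‖x‖ := by
    intro x
    have h1 : ⟪adjoint U x, adjoint U x⟫_ℂ = ⟪x, x⟫_ℂ := by
      rw [adjoint_inner_left]
      rw [show U (adjoint U x) = x by simpa using DFunLike.congr_fun hU2 x]
    have h2 : ‖adjoint U x‖ ^ 2 = ‖x‖ ^ 2 := by
      rw [← inner_self_eq_norm_sq (𝕜 := ℂ), ← inner_self_eq_norm_sq (𝕜 := ℂ), h1]
    calc ‖adjoint U x‖ = Real.sqrt (‖adjoint U x‖ ^ 2) := (Real.sqrt_sq (norm_nonneg _)).symm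
      _ = Real.sqrt (‖x‖ ^ 2) := by rw [h2]
      _ = ‖x‖ := Real.sqrt_sq (norm_nonneg _)
  -- T is a contraction
  have hTn : ∀ x : H, ‖T x‖ ≤ ‖x‖ := by
    intro x
    set y : H := U x with hy
    set d : D := adjoint B y with hd
    have hTx : T x = (y - B d) + B (Γ d) := by
      rw [hT]
      simp only [add_apply, comp_apply, sub_apply, one_apply, map_sub, ← hy, ← hd]
      abel
    have horth : ∀ w : D, ⟪y - B d, B w⟫_ℂ = 0 := by
      intro w
      rw [inner_sub_left, hBi, ← adjoint_inner_left, ← hd]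
      ring
    have hn1 : ‖(y - B d) + B (Γ d)‖ ^ 2 = ‖y - B d‖ ^ 2 + ‖B (Γ d)‖ ^ 2 := by
      rw [norm_add_sq (𝕜 := ℂ), horth]
      simp
    have hn2 : ‖y‖ ^ 2 = ‖y - B d‖ ^ 2 + ‖B d‖ ^ 2 := by
      have : y = (y - B d) + B d := by abel
      conv_lhs => rw [this]
      rw [norm_add_sq (𝕜 := ℂ), horth]
      simp
    have hΓd : ‖B (Γ d)‖ ≤ ‖B d‖ := by
      rw [hB d, hB (Γ d)]
      calc ‖Γ d‖ ≤ ‖Γ‖ * ‖d‖ := le_opNorm Γ d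
        _ ≤ 1 * ‖d‖ := mul_le_mul_of_nonneg_right hΓ (norm_nonneg _)
        _ = ‖d‖ := one_mul _
    have hsq : ‖T x‖ ^ 2 ≤ ‖x‖ ^ 2 := by
      rw [hTx, hn1, ← hUn x, ← hy, hn2]
      have := pow_le_pow_left₀ (norm_nonneg (B (Γ d))) hΓd 2
      linarith
    calc ‖T x‖ = Real.sqrt (‖T x‖ ^ 2) := (Real.sqrt_sq (norm_nonneg _)).symm
      _ ≤ Real.sqrt (‖x‖ ^ 2) := Real.sqrt_le_sqrt hsq
      _ = ‖x‖ := Real.sqrt_sq (norm_nonneg _)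
  -- invertibility of 1 - z T* and 1 - z U*
  have hTnorm : ‖T‖ ≤ 1 := opNorm_le_bound _ zero_le_one (fun x => by simpa using hTn x)
  have hUUnorm : ‖adjoint U‖ ≤ 1 :=
    opNorm_le_bound _ zero_le_one (fun x => by simpa using (hUsn x).le)
  have hsmul_lt : ∀ (W : H →L[ℂ] H), ‖W‖ ≤ 1 → ‖z • W‖ < 1 := by
    intro W hW
    rw [norm_smul]
    calc ‖z‖ * ‖W‖ ≤ ‖z‖ * 1 := mul_le_mul_of_nonneg_left hW (norm_nonneg _)
      _ = ‖z‖ := mul_one _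
      _ < 1 := hz
  have hTadjnorm : ‖adjoint T‖ ≤ 1 := by
    rw [LinearIsometryEquiv.norm_map (adjoint : (H →L[ℂ] H) ≃ₗᵢ⋆[ℂ] (H →L[ℂ] H)) T]
    exact hTnorm
  have hTU : IsUnit ((1 : H →L[ℂ] H) - z • adjoint T) :=
    ⟨Units.oneSub _ (hsmul_lt _ hTadjnorm), rfl⟩
  have hUU : IsUnit ((1 : H →L[ℂ] H) - z • adjoint U) :=
    ⟨Units.oneSub _ (hsmul_lt _ hUUnorm), rfl⟩
  set R : H →L[ℂ] H := Ring.inverse (1 - z • adjoint U) with hRdef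
  have hR1 : (1 - z • adjoint U) * R = 1 := Ring.mul_inverse_cancel _ hUU
  have hR2 : R * (1 - z • adjoint U) = 1 := Ring.inverse_mul_cancel _ hUU
  -- the key factorization
  set P : H →L[ℂ] H := B ∘L ((adjoint Γ - 1) ∘L adjoint B) with hPdef
  have hΓadj : adjoint (Γ - (1 : D →L[ℂ] D)) = adjoint Γ - 1 := by
    rw [← star_eq_adjoint, ← star_eq_adjoint, star_sub, star_one]
  have hTadj : adjoint T = adjoint U + adjoint U * P := by
    rw [hT, ← star_eq_adjoint, star_add, star_eq_adjoint, star_eq_adjoint, hPdef, mul_def]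
    simp [adjoint_comp, adjoint_adjoint, hΓadj, comp_assoc, sub_comp, comp_sub, one_def,
      adjoint_id, id_comp, comp_id]
  set A : D →L[ℂ] H := z • (R ∘L (adjoint U ∘L B)) with hAdef
  set C : H →L[ℂ] D := (adjoint Γ - 1) ∘L adjoint B with hCdef
  have hAC : A ∘L C = z • (R * (adjoint U * P)) := by
    rw [hAdef, hCdef, hPdef, mul_def, mul_def]
    simp [hCdef, smul_comp, comp_smul, comp_assoc, sub_comp, comp_sub, one_def, id_comp, comp_id, smul_sub]
  have hfact : (1 : H →L[ℂ] H) - z • adjoint T = (1 - z • adjoint U) * (1 - A ∘L C) := by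
    rw [hAC, hTadj, mul_sub, mul_one, mul_smul_comm, ← mul_assoc, hR1, one_mul, smul_add,
      sub_sub]
  have hACunit : IsUnit ((1 : H →L[ℂ] H) - A ∘L C) := by
    refine (Units.isUnit_units_mul hUU.unit _).mp ?_
    rw [IsUnit.unit_spec, ← hfact]
    exact hTU
  obtain ⟨hCAunit, hCAinv⟩ := woodbury A C hACunit
  obtain ⟨-, hACinv⟩ := woodbury C A hCAunit
  have hCAeq : C ∘L A = (adjoint Γ - 1) ∘L F₁ := by
    rw [hF₁, hAdef, hCdef]
    simp [smul_comp, comp_smul, comp_assoc]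
  rw [hCAeq] at hCAunit hACinv
  refine ⟨hTU, hCAunit, ?_⟩
  have hX : ((1 : H →L[ℂ] H) - z • adjoint T) *
      (Ring.inverse ((1 : H →L[ℂ] H) - A ∘L C) * R) = 1 := by
    rw [hfact, mul_assoc, ← mul_assoc ((1 : H →L[ℂ] H) - A ∘L C),
      Ring.mul_inverse_cancel _ hACunit, one_mul, hR1]
  have hfinal : Ring.inverse ((1 : H →L[ℂ] H) - z • adjoint T) =
      Ring.inverse ((1 : H →L[ℂ] H) - A ∘L C) * R := by
    have h0 := Ring.inverse_mul_cancel _ hTU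
    calc Ring.inverse ((1 : H →L[ℂ] H) - z • adjoint T)
        = Ring.inverse ((1 : H →L[ℂ] H) - z • adjoint T) *
            (((1 : H →L[ℂ] H) - z • adjoint T) *
              (Ring.inverse ((1 : H →L[ℂ] H) - A ∘L C) * R)) := by rw [hX, mul_one]
      _ = (Ring.inverse ((1 : H →L[ℂ] H) - z • adjoint T) *
            ((1 : H →L[ℂ] H) - z • adjoint T)) *
              (Ring.inverse ((1 : H →L[ℂ] H) - A ∘L C) * R) := by rw [mul_assoc]
      _ = Ring.inverse ((1 : H →L[ℂ] H) - A ∘L C) * R := by rw [h0, one_mul]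
  rw [hfinal, hACinv, hAdef, hCdef, add_mul, one_mul, mul_def]
  simp [smul_comp, comp_smul, comp_assoc, add_comp, one_def, id_comp, comp_id, smul_sub]
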